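/- For every positive integer n and all t, λ, a ∈ ℂ, det(K_n(t²·a) − t·λ·Id) = t^{n+1}·det(K_n(a) − λ·Id); that is, the characteristic polynomial of K_n(a) is quasihomogeneous with the variable λ of weight 1 and the parameter a of weight 2. -/

import Mathlib

/-- The `(n+1) × (n+1)` tridiagonal (generalized Sylvester–Kac) matrix `K_n(a)` with
superdiagonal entries `K[i][i+1] = (i+1)·a` and subdiagonal entries `K[i+1][i] = n − i`
(rows and columns indexed by `0, …, n`), all other entries `0`. -/
def Kmat (n : ℕ) (a : ℂ) : Matrix (Fin (n + 1)) (Fin (n + 1)) ℂ :=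
  Matrix.of fun i j =>
    if (j : ℕ) = (i : ℕ) + 1 then ((i : ℕ) + 1 : ℂ) * a
    else if (i : ℕ) = (j : ℕ) + 1 then (n : ℂ) - (j : ℕ)
    else 0

/-- Quasihomogeneity of the characteristic polynomial of `K_n(a)`:
`det (K_n(t²a) − tλ·Id) = t^{n+1}·det (K_n(a) − λ·Id)`, i.e. `λ` has weight `1` and
`a` has weight `2`. -/
theorem sylvester_kac_quasihomogeneous (n : ℕ) (hn : 0 < n) (t lam a : ℂ) :
    Matrix.det (Kmat n (t ^ 2 * a) - (t * lam) • (1 : Matrix (Fin (n + 1)) (Fin (n + 1)) ℂ)) =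
      t ^ (n + 1) *
        Matrix.det (Kmat n a - lam • (1 : Matrix (Fin (n + 1)) (Fin (n + 1)) ℂ)) := by
  by_cases ht : t = 0
  · subst ht
    rw [Matrix.det_of_lowerTriangular]
    · have : ∀ i : Fin (n + 1),
          (Kmat n ((0:ℂ) ^ 2 * a) - ((0:ℂ) * lam) • (1 : Matrix (Fin (n + 1)) (Fin (n + 1)) ℂ)) i i = 0 := by
        intro i
        simp [Kmat, Matrix.sub_apply, Matrix.one_apply]
      rw [Finset.prod_congr rfl (fun i _ => this i)]
      simp [pow_succ]
    · intro i j hij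
      have hij' : (i : ℕ) < (j : ℕ) := hij
      simp only [Kmat, Matrix.sub_apply, Matrix.smul_apply, Matrix.one_apply, Matrix.of_apply]
      have h2 : ¬ (i : ℕ) = (j : ℕ) + 1 := by omega
      have h3 : i ≠ j := Fin.ne_of_lt hij
      rw [if_neg h2, if_neg h3]
      split_ifs <;> simp
  · set M := Kmat n a - lam • (1 : Matrix (Fin (n + 1)) (Fin (n + 1)) ℂ) with hM
    set D : Matrix (Fin (n + 1)) (Fin (n + 1)) ℂ :=
      Matrix.diagonal (fun i => t ^ (i : ℕ)) with hD
    set E : Matrix (Fin (n + 1)) (Fin (n + 1)) ℂ :=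
      Matrix.diagonal (fun i => (t ^ (i : ℕ))⁻¹) with hE
    have key : Kmat n (t ^ 2 * a) - (t * lam) • (1 : Matrix (Fin (n + 1)) (Fin (n + 1)) ℂ)
        = t • (E * M * D) := by
      ext i j
      have hmul : (E * M * D) i j = (t ^ (i : ℕ))⁻¹ * M i j * t ^ (j : ℕ) := by
        rw [hE, hD, Matrix.mul_diagonal, Matrix.diagonal_mul]
      rw [Matrix.smul_apply, hmul, smul_eq_mul]
      simp only [hM, Kmat, Matrix.sub_apply, Matrix.smul_apply, Matrix.one_apply,
        Matrix.of_apply, smul_eq_mul]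
      by_cases h1 : (j : ℕ) = (i : ℕ) + 1
      · have h2 : ¬ (i : ℕ) = (j : ℕ) + 1 := by omega
        have h3 : i ≠ j := by intro h; subst h; omega
        simp only [if_pos h1, if_neg h3, h1]
        field_simp
        rw [if_pos trivial, if_pos trivial]
        ring
      · by_cases h2 : (i : ℕ) = (j : ℕ) + 1
        · have h3 : i ≠ j := by intro h; subst h; omega
          simp only [if_neg h1, if_pos h2, if_neg h3]
          rw [h2]
          field_simp
          ring
        · by_cases h3 : i = j
          · subst h3
            simp only [if_neg h1, if_pos rfl]
            field_simp
            ring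
          · simp only [if_neg h1, if_neg h2, if_neg h3]
            ring
    rw [key, Matrix.det_smul, Matrix.det_mul, Matrix.det_mul, hE, hD,
      Matrix.det_diagonal, Matrix.det_diagonal]
    have h1 : (∏ i : Fin (n + 1), t ^ (i : ℕ)) * (∏ i : Fin (n + 1), (t ^ (i : ℕ))⁻¹) = 1 := by
      rw [← Finset.prod_mul_distrib]
      simp [mul_inv_cancel₀ (pow_ne_zero _ ht)]
    simp only [Fintype.card_fin]
    calc t ^ (n + 1) * ((∏ i : Fin (n + 1), (t ^ (i : ℕ))⁻¹) * M.det *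
          (∏ i : Fin (n + 1), t ^ (i : ℕ)))
        = t ^ (n + 1) * M.det * ((∏ i : Fin (n + 1), t ^ (i : ℕ)) *
          (∏ i : Fin (n + 1), (t ^ (i : ℕ))⁻¹)) := by ring
      _ = t ^ (n + 1) * M.det := by rw [h1, mul_one]
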